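/- In a simply-laced triangle-free Coxeter system, if α is a reduced expression for a non-identity element, then the number of reduced expressions in the braid class of α is at most 2^{rank(α)}, where rank(α) is the number of braid shadows of the braid class [α]. -/

import Mathlib

open List

namespace BraidFormal

variable {B : Type*}

/-- A single braid move: replace a factor `s t s` with `t s t` where `m(s,t) = 3`. -/
def IsBraidMove (M : CoxeterMatrix B) (w w' : List B) : Prop :=
  ∃ (u v : List B) (s t : B), M s t = 3 ∧
    w = u ++ [s, t, s] ++ v ∧ w' = u ++ [t, s, t] ++ v

/-- Braid equivalence: the reflexive-transitive closure of braid moves. -/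
def BraidEquiv (M : CoxeterMatrix B) : List B → List B → Prop :=
  Relation.ReflTransGen (IsBraidMove M)

/-- The braid class of a word. -/
def BraidClass (M : CoxeterMatrix B) (α : List B) : Set (List B) :=
  {β | BraidEquiv M α β}

/-- `w` has a braid shadow at (0-based) positions `i, i+1, i+2`:
the letters there are `s, t, s` with `m(s,t) = 3`.
(This corresponds to the 1-based interval `⟦i+1, i+3⟧` of the paper.) -/
def HasShadowAt (M : CoxeterMatrix B) (w : List B) (i : ℕ) : Prop :=
  ∃ s t : B, M s t = 3 ∧ w[i]? = some s ∧ w[i+1]? = some t ∧ w[i+2]? = some s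

/-- The braid class of `α` has a braid shadow at position `i`. -/
def ClassHasShadowAt (M : CoxeterMatrix B) (α : List B) (i : ℕ) : Prop :=
  ∃ β ∈ BraidClass M α, HasShadowAt M β i

/-- The rank of a reduced expression: the number of braid shadows of its braid class. -/
noncomputable def rank (M : CoxeterMatrix B) (α : List B) : ℕ :=
  Set.ncard {i | ClassHasShadowAt M α i}

/-- A Coxeter matrix is simply laced if all entries are at most 3. -/
def SimplyLaced (M : CoxeterMatrix B) : Prop := ∀ s t : B, M s t ≤ 3

/-- A Coxeter matrix is triangle free if its Coxeter graph has no three-cycles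
(all of whose edges are labelled 3). -/
def TriangleFree (M : CoxeterMatrix B) : Prop :=
  ∀ s t u : B, s ≠ t → t ≠ u → s ≠ u → M s t = 3 → M t u = 3 → M s u ≠ 3

/-- The set of generators appearing in (0-based) position `k` of some word in the
braid class of `α`. -/
def classSupp (M : CoxeterMatrix B) (α : List B) (k : ℕ) : Set B :=
  {s | ∃ β ∈ BraidClass M α, β[k]? = some s}

/-- The set of generators appearing in (0-based) positions `i` through `j` of `w`. -/
def suppInterval (w : List B) (i j : ℕ) : Set B :=
  {s | ∃ k, i ≤ k ∧ k ≤ j ∧ w[k]? = some s}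

variable {W : Type*} [Group W] {M : CoxeterMatrix B}

/-- `α` is a link of rank `r`: a reduced expression of length `2r+1` whose braid class
has braid shadows exactly at the (0-based) positions `0, 2, 4, …, 2r-2`
(the 1-based intervals `⟦1,3⟧, ⟦3,5⟧, …, ⟦2r-1,2r+1⟧`). -/
def IsLink (cs : CoxeterSystem M W) (α : List B) (r : ℕ) : Prop :=
  cs.IsReduced α ∧ α.length = 2 * r + 1 ∧
    ∀ i : ℕ, ClassHasShadowAt M α i ↔ ∃ j < r, i = 2 * j

/-- A Fibonacci link: a link all of whose braid-class braid shadows are braid shadows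
of the link itself. -/
def IsFibLink (cs : CoxeterSystem M W) (φ : List B) (r : ℕ) : Prop :=
  IsLink cs φ r ∧ ∀ i : ℕ, ClassHasShadowAt M φ i → HasShadowAt M φ i

/-! ### Auxiliary development -/

section Aux

variable {M : CoxeterMatrix B}

lemma isBraidMove_symm {w w' : List B} (h : IsBraidMove M w w') : IsBraidMove M w' w := by
  obtain ⟨u, v, s, t, hm, h1, h2⟩ := h
  exact ⟨u, v, t, s, (M.symmetric s t) ▸ hm, h2, h1⟩

lemma braidEquiv_refl (w : List B) : BraidEquiv M w w := Relation.ReflTransGen.refl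

lemma braidEquiv_symm {w w' : List B} (h : BraidEquiv M w w') : BraidEquiv M w' w :=
  by
  induction h with
  | refl => exact Relation.ReflTransGen.refl
  | tail _ hm ih => exact Relation.ReflTransGen.head (isBraidMove_symm hm) ih

lemma braidEquiv_trans {w₁ w₂ w₃ : List B} (h : BraidEquiv M w₁ w₂) (h' : BraidEquiv M w₂ w₃) :
    BraidEquiv M w₁ w₃ := Relation.ReflTransGen.trans h h'

lemma braidEquiv_of_move {w w' : List B} (h : IsBraidMove M w w') : BraidEquiv M w w' :=
  Relation.ReflTransGen.single h

lemma mem_braidClass_self (α : List B) : α ∈ BraidClass M α := braidEquiv_refl α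

lemma braidClass_eq_of_mem {α β : List B} (h : β ∈ BraidClass M α) :
    BraidClass M β = BraidClass M α := by
  ext γ
  exact ⟨fun hg => braidEquiv_trans h hg, fun hg => braidEquiv_trans (braidEquiv_symm h) hg⟩

lemma isBraidMove_length {w w' : List B} (h : IsBraidMove M w w') : w.length = w'.length := by
  obtain ⟨u, v, s, t, _, h1, h2⟩ := h
  subst h1; subst h2; simp

lemma braidEquiv_length {w w' : List B} (h : BraidEquiv M w w') : w.length = w'.length := by
  induction h with
  | refl => rfl
  | tail _ hm ih => exact ih.trans (isBraidMove_length hm)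

lemma isBraidMove_cons {w w' : List B} (x : B) (h : IsBraidMove M w w') :
    IsBraidMove M (x :: w) (x :: w') := by
  obtain ⟨u, v, s, t, hm, h1, h2⟩ := h
  exact ⟨x :: u, v, s, t, hm, by simp [h1], by simp [h2]⟩

lemma braidEquiv_cons {w w' : List B} (x : B) (h : BraidEquiv M w w') :
    BraidEquiv M (x :: w) (x :: w') := by
  induction h with
  | refl => exact braidEquiv_refl _
  | tail _ hm ih => exact Relation.ReflTransGen.tail ih (isBraidMove_cons x hm)

/-- Case analysis on a braid move: either it is at position 0, or it is a move on the tail. -/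
lemma isBraidMove_elim {w w' : List B} (h : IsBraidMove M w w') {P : Prop}
    (h0 : ∀ s t v, M s t = 3 → w = s :: t :: s :: v → w' = t :: s :: t :: v → P)
    (hc : ∀ x w₀ w₀', w = x :: w₀ → w' = x :: w₀' → IsBraidMove M w₀ w₀' → P) : P := by
  obtain ⟨u, v, s, t, hm, h1, h2⟩ := h
  cases u with
  | nil => exact h0 s t v hm (by simpa using h1) (by simpa using h2)
  | cons x u' =>
    exact hc x (u' ++ [s, t, s] ++ v) (u' ++ [t, s, t] ++ v) (by simpa using h1)
      (by simpa using h2) ⟨u', v, s, t, hm, rfl, rfl⟩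

end Aux
section Aux2

variable {W : Type*} [Group W] {M : CoxeterMatrix B} (cs : CoxeterSystem M W)

lemma braid_rel {s t : B} (h : M s t = 3) :
    cs.simple s * cs.simple t * cs.simple s = cs.simple t * cs.simple s * cs.simple t := by
  have h3 : (cs.simple s * cs.simple t) ^ 3 = 1 := h ▸ cs.simple_mul_simple_pow s t
  have e2 : (cs.simple s * cs.simple t * cs.simple s) *
      (cs.simple t * cs.simple s * cs.simple t) = 1 := by
    have h3' := h3
    rw [pow_succ, pow_two] at h3'
    simpa [mul_assoc] using h3'
  have : (cs.simple s * cs.simple t * cs.simple s) =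
      (cs.simple t * cs.simple s * cs.simple t)⁻¹ := eq_inv_of_mul_eq_one_left ?_
  · rw [this]
    simp [mul_inv_rev, cs.inv_simple, mul_assoc]
  · rw [← e2]

lemma isBraidMove_wordProd {w w' : List B} (h : IsBraidMove M w w') :
    cs.wordProd w = cs.wordProd w' := by
  obtain ⟨u, v, s, t, hm, h1, h2⟩ := h
  subst h1; subst h2
  simp only [cs.wordProd_append]
  congr 1
  congr 1
  have : cs.wordProd [s, t, s] = cs.wordProd [t, s, t] := by
    simp only [cs.wordProd_cons, cs.wordProd_nil, mul_one, ← mul_assoc]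
    exact braid_rel cs hm
  exact this

lemma braidEquiv_wordProd {w w' : List B} (h : BraidEquiv M w w') :
    cs.wordProd w = cs.wordProd w' := by
  induction h with
  | refl => rfl
  | tail _ hm ih => exact ih.trans (isBraidMove_wordProd cs hm)

lemma braidEquiv_isReduced {w w' : List B} (h : BraidEquiv M w w') (hr : cs.IsReduced w) :
    cs.IsReduced w' := by
  unfold CoxeterSystem.IsReduced at *
  rw [← braidEquiv_wordProd cs h, ← braidEquiv_length h]
  exact hr

lemma not_isReduced_of_shorter {w w' : List B} (h : cs.wordProd w = cs.wordProd w')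
    (hl : w'.length < w.length) : ¬ cs.IsReduced w := by
  intro hr
  have := cs.length_wordProd_le w'
  rw [← h, hr] at this
  omega

lemma not_isReduced_cons_cons (x : B) (r : List B) : ¬ cs.IsReduced (x :: x :: r) := by
  apply not_isReduced_of_shorter cs (w' := r)
  · simp [cs.wordProd_cons, ← mul_assoc, cs.simple_mul_simple_self]
  · simp

lemma not_isReduced_stst {s t : B} (h : M s t = 3) (r : List B) :
    ¬ cs.IsReduced (s :: t :: s :: t :: r) := by
  apply not_isReduced_of_shorter cs (w' := t :: s :: r)
  · simp only [cs.wordProd_cons, ← mul_assoc]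
    rw [braid_rel cs h]
    simp [mul_assoc, cs.simple_mul_simple_self]
  · simp

end Aux2
section Aux3

variable {W : Type*} [Group W] {M : CoxeterMatrix B} (cs : CoxeterSystem M W)

lemma hasShadowAt_cons_succ {w : List B} {x : B} {i : ℕ} :
    HasShadowAt M (x :: w) (i + 1) ↔ HasShadowAt M w i := by
  unfold HasShadowAt
  simp only [List.getElem?_cons_succ]

lemma eq_cons_of_getElem0 {w : List B} {a : B} (h : w[0]? = some a) :
    w = a :: w.drop 1 := by
  cases w with
  | nil => simp at h
  | cons x u => simp_all

lemma eq_cons_cons_of_getElem01 {w : List B} {a b : B} (h0 : w[0]? = some a)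
    (h1 : w[1]? = some b) : w = a :: b :: w.drop 2 := by
  cases w with
  | nil => simp at h0
  | cons x u =>
    cases u with
    | nil => simp at h1
    | cons y u' => simp_all

lemma shadow0_form {w : List B} (h : HasShadowAt M w 0) :
    ∃ s t, M s t = 3 ∧ w = s :: t :: s :: w.drop 3 := by
  obtain ⟨s, t, hm, h0, h1, h2⟩ := h
  refine ⟨s, t, hm, ?_⟩
  cases w with
  | nil => simp at h0
  | cons x u => cases u with
    | nil => simp at h1
    | cons y u' => cases u' with
      | nil => simp at h2
      | cons z u'' => simp_all

lemma shadow0_of_form {s t : B} (v : List B) (hm : M s t = 3) :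
    HasShadowAt M (s :: t :: s :: v) 0 :=
  ⟨s, t, hm, by simp, by simp, by simp⟩

lemma shadow1_of_form {x s t : B} (v : List B) (hm : M s t = 3) :
    HasShadowAt M (x :: s :: t :: s :: v) 1 :=
  hasShadowAt_cons_succ.mpr (shadow0_of_form v hm)

lemma not_isReduced_of_shadow01 {w : List B} (h0 : HasShadowAt M w 0)
    (h1 : HasShadowAt M w 1) : ¬ cs.IsReduced w := by
  obtain ⟨s, t, hm, hw⟩ := shadow0_form h0
  obtain ⟨s', t', hm', ha, hb, hc⟩ := h1
  rw [hw] at ha hb hc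
  simp only [List.getElem?_cons_succ, List.getElem?_cons_zero] at ha hb hc
  -- ha : some t = some s', hb : some s = some t', hc : (w.drop 3)[0]? = some s'
  have hs' : s' = t := by injection ha with h'; exact h'.symm
  have ht' : t' = s := by injection hb with h'; exact h'.symm
  subst hs'; subst ht'
  rw [hw, eq_cons_of_getElem0 hc]
  exact not_isReduced_stst cs hm _

end Aux3
section Aux4

variable {W : Type*} [Group W] {M : CoxeterMatrix B} (cs : CoxeterSystem M W)

lemma classHasShadowAt_congr {α β : List B} (h : β ∈ BraidClass M α) (i : ℕ) :
    ClassHasShadowAt M β i ↔ ClassHasShadowAt M α i := by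
  unfold ClassHasShadowAt
  rw [braidClass_eq_of_mem h]

lemma classShadow_of_mem {α β : List B} (h : β ∈ BraidClass M α) {i : ℕ}
    (hs : HasShadowAt M β i) : ClassHasShadowAt M α i := ⟨β, h, hs⟩

/-- If no word of the class has a shadow at position 0, the first letter is frozen and
tails evolve by braid moves. -/
lemma frozen_head {α : List B} (hna : ¬ ClassHasShadowAt M α 0) {x : B} {w : List B}
    (hx : α = x :: w) : ∀ β ∈ BraidClass M α, ∃ u, β = x :: u ∧ BraidEquiv M w u := by
  intro β hβ
  induction hβ with
  | refl => exact ⟨w, hx, braidEquiv_refl w⟩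
  | @tail β' β'' hb hm ih =>
    obtain ⟨u, hu, hequiv⟩ := ih
    subst hu
    refine isBraidMove_elim hm ?_ ?_
    · intro s t v hm3 h1 h2
      exact absurd (classShadow_of_mem hb (h1 ▸ shadow0_of_form v hm3)) hna
    · intro y w₀ w₀' h1 h2 hmv
      have hy : x = y := by injection h1
      have hw₀ : u = w₀ := by injection h1
      subst hy; subst hw₀
      exact ⟨w₀', h2, Relation.ReflTransGen.tail hequiv hmv⟩

lemma exists_shadow0_of_getElem0_ne {w w' : List B} (h : BraidEquiv M w w')
    (hne : w[0]? ≠ w'[0]?) : ∃ δ, BraidEquiv M w δ ∧ HasShadowAt M δ 0 := by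
  induction h with
  | refl => exact absurd rfl hne
  | @tail β' β'' hb hm ih =>
    by_cases hcase : w[0]? = β'[0]?
    · refine isBraidMove_elim hm ?_ ?_
      · intro s t v hm3 h1 h2
        exact ⟨β', hb, h1 ▸ shadow0_of_form v hm3⟩
      · intro y w₀ w₀' h1 h2 _
        exfalso
        apply hne
        rw [hcase, h1, h2]
        simp
    · exact ih hcase

/-- Number-of-steps-indexed reachability. -/
def ReachN (M : CoxeterMatrix B) : ℕ → List B → List B → Prop
  | 0 => fun w w' => w = w'
  | (k+1) => fun w w' => ∃ c, IsBraidMove M w c ∧ ReachN M k c w'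

lemma reachN_tail {k : ℕ} : ∀ {w c w' : List B}, ReachN M k w c → IsBraidMove M c w' →
    ReachN M (k + 1) w w' := by
  induction k with
  | zero => intro w c w' h hm; exact ⟨w', h ▸ hm, rfl⟩
  | succ k ih =>
    intro w c w' h hm
    obtain ⟨d, hd, hr⟩ := h
    exact ⟨d, hd, ih hr hm⟩

lemma braidEquiv_reachN {w w' : List B} (h : BraidEquiv M w w') : ∃ k, ReachN M k w w' := by
  induction h with
  | refl => exact ⟨0, rfl⟩
  | tail hb hm ih =>
    obtain ⟨k, hk⟩ := ih
    exact ⟨k + 1, reachN_tail hk hm⟩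

lemma reachN_reduced {k : ℕ} : ∀ {w w' : List B}, ReachN M k w w' → cs.IsReduced w →
    cs.IsReduced w' := by
  induction k with
  | zero => intro w w' h hr; exact h ▸ hr
  | succ k ih =>
    intro w w' h hr
    obtain ⟨c, hc, hk⟩ := h
    exact ih hk (braidEquiv_isReduced cs (braidEquiv_of_move hc) hr)

lemma reachN_braidEquiv {k : ℕ} : ∀ {w w' : List B}, ReachN M k w w' → BraidEquiv M w w' := by
  induction k with
  | zero => intro w w' h; exact h ▸ braidEquiv_refl w
  | succ k ih =>
    intro w w' h
    obtain ⟨c, hc, hk⟩ := h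
    exact braidEquiv_trans (braidEquiv_of_move hc) (ih hk)

lemma shadow_lt_length {w : List B} {i : ℕ} (h : HasShadowAt M w i) : i + 2 < w.length := by
  obtain ⟨s, t, _, _, _, h2⟩ := h
  exact (List.getElem?_eq_some_iff.mp h2).1

lemma classShadow_finite (α : List B) : {i | ClassHasShadowAt M α i}.Finite := by
  apply Set.Finite.subset (Set.finite_Iio α.length)
  rintro i ⟨β, hβ, hs⟩
  have := shadow_lt_length hs
  have hl := braidEquiv_length hβ
  simp only [Set.mem_Iio]
  omega

end Aux4
section Main

variable {W : Type*} [Group W] {M : CoxeterMatrix B} (cs : CoxeterSystem M W)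

/-- Clause B: no class shadows at both positions 0 and 1. -/
def ClauseB (n : ℕ) : Prop := ∀ α : List B, cs.IsReduced α → α.length = n →
  ClassHasShadowAt M α 0 → ClassHasShadowAt M α 1 → False

/-- Clause T: front pair rigidity. -/
def ClauseT (n : ℕ) : Prop := ∀ α : List B, cs.IsReduced α → α.length = n →
  ClassHasShadowAt M α 0 → ¬ ClassHasShadowAt M α 1 → ∀ β ∈ BraidClass M α,
  (β[0]? = α[0]? ∧ β[1]? = α[1]?) ∨ (β[0]? = α[1]? ∧ β[1]? = α[0]?)

/-- Clause C: same-side transport of 2-dropped words. -/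
def ClauseC (n : ℕ) : Prop := ∀ α : List B, cs.IsReduced α → α.length = n →
  ClassHasShadowAt M α 0 → ¬ ClassHasShadowAt M α 1 →
  ∀ β ∈ BraidClass M α, ∀ β' ∈ BraidClass M α, β[0]? = β'[0]? →
  BraidEquiv M (β.drop 2) (β'.drop 2)

/-- Clause D: parallel transport. -/
def ClauseD (n : ℕ) : Prop := ∀ a b : B, ∀ w w' : List B, M a b = 3 →
  cs.IsReduced (a :: w) → cs.IsReduced (b :: w) → cs.IsReduced (a :: w') →
  cs.IsReduced (b :: w') → (a :: w).length = n →
  BraidEquiv M (a :: w) (a :: w') → BraidEquiv M (b :: w) (b :: w')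

/-- Clause A: the counting bound. -/
def ClauseA (n : ℕ) : Prop := ∀ α : List B, cs.IsReduced α → α.length = n →
  (BraidClass M α).Finite ∧
    (BraidClass M α).ncard ≤ 2 ^ (Set.ncard {i | ClassHasShadowAt M α i})

theorem clauseB_step (n : ℕ)
    (ih : ∀ m, m < n → ClauseB cs m ∧ ClauseT cs m ∧ ClauseC cs m ∧ ClauseD cs m ∧ ClauseA cs m) :
    ClauseB cs n := by
  -- The key contradiction: a word with a shadow at 0 cannot be "parallel" to one
  -- with a shadow at 1 sharing its first two letters, with braid-equivalent 2-drops.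
  have key : ∀ β δ : List B, cs.IsReduced β → cs.IsReduced δ → β.length = n →
      HasShadowAt M β 0 → HasShadowAt M δ 1 → β[0]? = δ[0]? → β[1]? = δ[1]? →
      BraidEquiv M (β.drop 2) (δ.drop 2) → False := by
    intro β δ hredβ hredδ hlen hs0 hs1 he0 he1 hdeq
    obtain ⟨s, t, hm, hβform⟩ := shadow0_form hs0
    have hβ0 : β[0]? = some s := by rw [hβform]; simp
    have hβ1 : β[1]? = some t := by rw [hβform]; simp
    have hβ2 : β[2]? = some s := by rw [hβform]; simp
    obtain ⟨t₁, q, hm1, hδ1, hδ2, hδ3⟩ := hs1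
    have ht₁ : t₁ = t := by
      rw [← he1, hβ1] at hδ1; injection hδ1 with h'; exact h'.symm
    rw [ht₁] at hδ1 hδ3 hm1
    by_cases hqs : q = s
    · -- δ has shadows at 0 and 1: not reduced
      have hδ0 : HasShadowAt M δ 0 :=
        ⟨s, t, hm, by rw [← he0, hβ0], hδ1, by rw [hδ2, hqs]⟩
      have hs1' : HasShadowAt M δ 1 := ⟨t, q, hm1, hδ1, hδ2, hδ3⟩
      exact (not_isReduced_of_shadow01 cs hδ0 hs1') hredδ
    · -- apply rigidity at level n-2
      have hd0 : (β.drop 2)[0]? = some s := by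
        rw [List.getElem?_drop]; exact hβ2
      have hd0' : (δ.drop 2)[0]? = some q := by
        rw [List.getElem?_drop]; exact hδ2
      have hd1' : (δ.drop 2)[1]? = some t := by
        rw [List.getElem?_drop]; exact hδ3
      have hne : (β.drop 2)[0]? ≠ (δ.drop 2)[0]? := by
        rw [hd0, hd0']; intro h'; injection h' with h''; exact hqs h''.symm
      obtain ⟨δ₀, hδ₀eq, hδ₀s⟩ := exists_shadow0_of_getElem0_ne hdeq hne
      have hcs0 : ClassHasShadowAt M (β.drop 2) 0 := ⟨δ₀, hδ₀eq, hδ₀s⟩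
      have hredd : cs.IsReduced (β.drop 2) := CoxeterSystem.IsReduced.drop hredβ 2
      have hlend : (β.drop 2).length = n - 2 := by simp [hlen]
      have hn3 : 3 ≤ n := by
        have := shadow_lt_length hs0; omega
      obtain ⟨hB', hT', -, -, -⟩ := ih (n - 2) (by omega)
      have hcs1 : ¬ ClassHasShadowAt M (β.drop 2) 1 :=
        fun h1 => hB' (β.drop 2) hredd hlend hcs0 h1
      have hT := hT' (β.drop 2) hredd hlend hcs0 hcs1 (δ.drop 2) hdeq
      rcases hT with ⟨e0, -⟩ | ⟨e0, e1⟩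
      · rw [hd0', hd0] at e0; injection e0 with h''; exact hqs h''
      · -- (δ.drop 2)[1]? = (β.drop 2)[0]? gives t = s, contradicting M s t = 3
        rw [hd1', hd0] at e1
        injection e1 with h''
        rw [h'', M.diagonal] at hm
        omega
  -- The path-length induction
  have QQ : ∀ k : ℕ, ∀ β γ : List B, ReachN M k β γ → cs.IsReduced β → cs.IsReduced γ →
      β.length = n → HasShadowAt M γ 1 →
      ¬ HasShadowAt M β 0 ∧ ∃ δ, cs.IsReduced δ ∧ HasShadowAt M δ 1 ∧ β[0]? = δ[0]? ∧
        β[1]? = δ[1]? ∧ BraidEquiv M (β.drop 2) (δ.drop 2) := by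
    intro k
    induction k using Nat.strong_induction_on with
    | _ k ihk =>
    intro β γ hreach hredβ hredγ hlenβ hs1γ
    match k, hreach with
    | 0, hreach =>
      have hβγ : β = γ := hreach
      subst hβγ
      refine ⟨fun h0 => (not_isReduced_of_shadow01 cs h0 hs1γ) hredβ,
        β, hredβ, hs1γ, rfl, rfl, braidEquiv_refl _⟩
    | (k' + 1), hreach =>
      obtain ⟨ww, hmv, hrest⟩ := hreach
      have hredc : cs.IsReduced ww := braidEquiv_isReduced cs (braidEquiv_of_move hmv) hredβ
      have hlenc : ww.length = n := (isBraidMove_length hmv).symm.trans hlenβ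
      obtain ⟨hn0c, δ, hredδ, hs1δ, he0, he1, heq⟩ :=
        ihk k' (by omega) ww γ hrest hredc hredγ hlenc hs1γ
      refine isBraidMove_elim hmv ?_ ?_
      · -- front move: c would have a shadow at 0
        intro s t v hm3 h1 h2
        have hm3' : M t s = 3 := (M.symmetric t s).trans hm3
        have hc0 : HasShadowAt M ww 0 := by rw [h2]; exact shadow0_of_form v hm3'
        exact absurd hc0 hn0c
      · intro x w₀ w₀' h1 h2 hmv₀
        refine isBraidMove_elim hmv₀ ?_ ?_
        · -- move at position 1: β itself has a shadow at 1
          intro s t v hm3 g1 g2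
          have hs1β : HasShadowAt M β 1 := by
            rw [h1, g1]; exact shadow1_of_form v hm3
          exact ⟨fun h0 => (not_isReduced_of_shadow01 cs h0 hs1β) hredβ,
            β, hredβ, hs1β, rfl, rfl, braidEquiv_refl _⟩
        · -- move at position ≥ 2
          intro y w₁₀ w₁₀' g1 g2 hmv₁
          have hβform : β = x :: y :: w₁₀ := by rw [h1, g1]
          have hcform : ww = x :: y :: w₁₀' := by rw [h2, g2]
          have hdβ : β.drop 2 = w₁₀ := by rw [hβform]; simp
          have hdc : ww.drop 2 = w₁₀' := by rw [hcform]; simp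
          have heqβδ : BraidEquiv M (β.drop 2) (δ.drop 2) := by
            rw [hdβ]
            exact braidEquiv_trans (braidEquiv_of_move hmv₁) (hdc ▸ heq)
          have hβ0 : β[0]? = some x := by rw [hβform]; simp
          have hβ1 : β[1]? = some y := by rw [hβform]; simp
          have hc0 : ww[0]? = some x := by rw [hcform]; simp
          have hc1 : ww[1]? = some y := by rw [hcform]; simp
          have hcδ0 : β[0]? = δ[0]? := by rw [hβ0, ← hc0]; exact he0
          have hcδ1 : β[1]? = δ[1]? := by rw [hβ1, ← hc1]; exact he1
          exact ⟨fun h0 => key β δ hredβ hredδ hlenβ h0 hs1δ hcδ0 hcδ1 heqβδ,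
            δ, hredδ, hs1δ, hcδ0, hcδ1, heqβδ⟩
  -- Assemble
  intro α hred hlen h0 h1
  obtain ⟨β₀, hβ₀, hs0β₀⟩ := h0
  obtain ⟨γ, hγ, hs1γ⟩ := h1
  have hequiv : BraidEquiv M β₀ γ := braidEquiv_trans (braidEquiv_symm hβ₀) hγ
  obtain ⟨k, hk⟩ := braidEquiv_reachN hequiv
  have hredβ₀ : cs.IsReduced β₀ := braidEquiv_isReduced cs hβ₀ hred
  have hredγ : cs.IsReduced γ := braidEquiv_isReduced cs hγ hred
  have hlenβ₀ : β₀.length = n := (braidEquiv_length hβ₀).symm.trans hlen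
  exact (QQ k β₀ γ hk hredβ₀ hredγ hlenβ₀ hs1γ).1 hs0β₀

end Main
section Main2

variable {W : Type*} [Group W] {M : CoxeterMatrix B} (cs : CoxeterSystem M W)

theorem clauseT_step (n : ℕ) : ClauseT cs n := by
  intro α hred hlen h0 hn1 β hβ
  induction hβ with
  | refl => exact Or.inl ⟨rfl, rfl⟩
  | @tail β' β'' hb hm ihT =>
    refine isBraidMove_elim hm ?_ ?_
    · -- front move
      intro s t v h1 h2 h3
      have hβ'0 : β'[0]? = some s := by rw [h2]; simp
      have hβ'1 : β'[1]? = some t := by rw [h2]; simp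
      have hβ''0 : β''[0]? = some t := by rw [h3]; simp
      have hβ''1 : β''[1]? = some s := by rw [h3]; simp
      rcases ihT with ⟨e0, e1⟩ | ⟨e0, e1⟩
      · exact Or.inr ⟨by rw [hβ''0, ← e1, hβ'1], by rw [hβ''1, ← e0, hβ'0]⟩
      · exact Or.inl ⟨by rw [hβ''0, ← e1, hβ'1], by rw [hβ''1, ← e0, hβ'0]⟩
    · intro x w₀ w₀' h1 h2 hmv₀
      refine isBraidMove_elim hmv₀ ?_ ?_
      · -- move at position 1: contradiction with hn1
        intro s t v g1 g2 g3
        have hs1 : HasShadowAt M β' 1 := by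
          rw [h1, g2]; exact shadow1_of_form v g1
        exact absurd (classShadow_of_mem hb hs1) hn1
      · -- move at position ≥ 2: first two letters unchanged
        intro y w₁₀ w₁₀' g1 g2 hmv₁
        have hf : β' = x :: y :: w₁₀ := by rw [h1, g1]
        have hf' : β'' = x :: y :: w₁₀' := by rw [h2, g2]
        have e0 : β''[0]? = β'[0]? := by rw [hf, hf']; simp
        have e1 : β''[1]? = β'[1]? := by rw [hf, hf']; simp
        rcases ihT with ⟨a0, a1⟩ | ⟨a0, a1⟩
        · exact Or.inl ⟨e0.trans a0, e1.trans a1⟩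
        · exact Or.inr ⟨e0.trans a0, e1.trans a1⟩

theorem clauseC_step (n : ℕ)
    (ih : ∀ m, m < n → ClauseB cs m ∧ ClauseT cs m ∧ ClauseC cs m ∧ ClauseD cs m ∧ ClauseA cs m) :
    ClauseC cs n := by
  intro α hred hlen h0 hn1
  have hT := clauseT_step cs n α hred hlen h0 hn1
  -- setup: α = a :: b :: _, with M a b = 3 and a ≠ b
  obtain ⟨β₀, hβ₀, hs0β₀⟩ := h0
  have hn3 : 3 ≤ n := by
    have h2 := shadow_lt_length hs0β₀
    have h3 := braidEquiv_length hβ₀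
    omega
  have hα0 : α[0]? = some (α.get ⟨0, by omega⟩) := by
    rw [List.getElem?_eq_getElem (by omega)]; rfl
  have hα1 : α[1]? = some (α.get ⟨1, by omega⟩) := by
    rw [List.getElem?_eq_getElem (by omega)]; rfl
  set a := α.get ⟨0, by omega⟩ with ha_def
  set b := α.get ⟨1, by omega⟩ with hb_def
  have hαform : α = a :: b :: α.drop 2 := eq_cons_cons_of_getElem01 hα0 hα1
  have hane : a ≠ b := by
    intro h'
    rw [h'] at hαform
    exact (not_isReduced_cons_cons cs b _) (hαform ▸ hred)
  have hab : M a b = 3 := by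
    obtain ⟨s, t, hm, hβ₀form⟩ := shadow0_form hs0β₀
    have hb0 : β₀[0]? = some s := by rw [hβ₀form]; simp
    have hb1 : β₀[1]? = some t := by rw [hβ₀form]; simp
    rcases hT β₀ hβ₀ with ⟨e0, e1⟩ | ⟨e0, e1⟩
    · rw [hb0, hα0] at e0; rw [hb1, hα1] at e1
      injection e0 with f0; injection e1 with f1
      rw [← f0, ← f1]; exact hm
    · rw [hb0, hα1] at e0; rw [hb1, hα0] at e1
      injection e0 with f0; injection e1 with f1
      rw [← f0, ← f1]; exact (M.symmetric t s).trans hm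
  have hba : M b a = 3 := (M.symmetric b a).trans hab
  obtain ⟨-, -, -, hD', -⟩ := ih (n - 2) (by omega)
  -- the invariant
  have inv : ∀ β ∈ BraidClass M α,
      (β[0]? = some a ∧ BraidEquiv M (α.drop 2) (β.drop 2)) ∨
      (β[0]? = some b ∧ ∃ u, cs.IsReduced (a :: u) ∧ cs.IsReduced (b :: u) ∧
        BraidEquiv M (α.drop 2) (a :: u) ∧ BraidEquiv M (β.drop 2) (b :: u)) := by
    intro β hβ
    induction hβ with
    | refl => exact Or.inl ⟨hα0, braidEquiv_refl _⟩
    | @tail β' β'' hb' hm ihv =>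
      have hredβ' : cs.IsReduced β' := braidEquiv_isReduced cs hb' hred
      have hredβ'' : cs.IsReduced β'' :=
        braidEquiv_isReduced cs (braidEquiv_of_move hm) hredβ'
      refine isBraidMove_elim hm ?_ ?_
      · -- front move
        intro s t v h1 h2 h3
        have hβ'0 : β'[0]? = some s := by rw [h2]; simp
        have hβ''0 : β''[0]? = some t := by rw [h3]; simp
        have hd' : β'.drop 2 = s :: v := by rw [h2]; simp
        have hd'' : β''.drop 2 = t :: v := by rw [h3]; simp
        have hβ''mem : β'' ∈ BraidClass M α := Relation.ReflTransGen.tail hb' hm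
        rcases hT β' hb' with ⟨e0, -⟩ | ⟨e0, -⟩
        · -- s = a
          have f0 : s = a := by
            rw [hβ'0, hα0] at e0; injection e0 with f
          have f1 : t = b := by
            rcases hT β'' hβ''mem with ⟨e0'', -⟩ | ⟨e0'', -⟩
            · exfalso
              have ft : t = a := by
                rw [hβ''0, hα0] at e0''; injection e0'' with f
              rw [f0, ft, M.diagonal] at h1; omega
            · rw [hβ''0, hα1] at e0''; injection e0'' with f
          rcases ihv with ⟨-, heqv⟩ | ⟨g0, -⟩
          · refine Or.inr ⟨by rw [hβ''0, f1], v, ?_, ?_, ?_, ?_⟩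
            · rw [← f0]; exact hd' ▸ CoxeterSystem.IsReduced.drop hredβ' 2
            · rw [← f1]; exact hd'' ▸ CoxeterSystem.IsReduced.drop hredβ'' 2
            · rw [← f0]; exact hd' ▸ heqv
            · rw [hd'', f1]; exact braidEquiv_refl _
          · exfalso
            have f0' : s = b := by
              rw [hβ'0] at g0; injection g0 with f
            exact hane (f0.symm.trans f0')
        · -- s = b
          have f0 : s = b := by
            rw [hβ'0, hα1] at e0; injection e0 with f
          have f1 : t = a := by
            rcases hT β'' hβ''mem with ⟨e0'', -⟩ | ⟨e0'', -⟩
            · rw [hβ''0, hα0] at e0''; injection e0'' with f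
            · exfalso
              have ft : t = b := by
                rw [hβ''0, hα1] at e0''; injection e0'' with f
              rw [f0, ft, M.diagonal] at h1; omega
          rcases ihv with ⟨g0, -⟩ | ⟨-, u, hru_a, hru_b, hae, hbe⟩
          · exfalso
            have f0' : s = a := by
              rw [hβ'0] at g0; injection g0 with f
            exact hane (f0'.symm.trans f0)
          · have hdb' : β'.drop 2 = b :: v := by rw [hd', f0]
            have hbv : BraidEquiv M (b :: v) (b :: u) := hdb' ▸ hbe
            have hred_bv : cs.IsReduced (b :: v) := hdb' ▸ CoxeterSystem.IsReduced.drop hredβ' 2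
            have hred_av : cs.IsReduced (a :: v) := by
              rw [← f1]; exact hd'' ▸ CoxeterSystem.IsReduced.drop hredβ'' 2
            have hlen_bv : (b :: v).length = n - 2 := by
              have h2' : (β'.drop 2).length = n - 2 := by
                rw [List.length_drop, ← braidEquiv_length hb', hlen]
              rw [← hdb']; exact h2'
            have hav : BraidEquiv M (a :: v) (a :: u) :=
              hD' b a v u hba hred_bv hred_av hru_b hru_a hlen_bv hbv
            refine Or.inl ⟨by rw [hβ''0, f1], ?_⟩
            rw [hd'', f1]
            exact braidEquiv_trans hae (braidEquiv_symm hav)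
      · intro x w₀ w₀' h1 h2 hmv₀
        refine isBraidMove_elim hmv₀ ?_ ?_
        · intro s t v g1 g2 g3
          have hs1 : HasShadowAt M β' 1 := by
            rw [h1, g2]; exact shadow1_of_form v g1
          exact absurd (classShadow_of_mem hb' hs1) hn1
        · intro y w₁₀ w₁₀' g1 g2 hmv₁
          have hf : β' = x :: y :: w₁₀ := by rw [h1, g1]
          have hf' : β'' = x :: y :: w₁₀' := by rw [h2, g2]
          have e0 : β''[0]? = β'[0]? := by rw [hf, hf']; simp
          have hd : β'.drop 2 = w₁₀ := by rw [hf]; simp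
          have hd' : β''.drop 2 = w₁₀' := by rw [hf']; simp
          have hstep : BraidEquiv M (β'.drop 2) (β''.drop 2) := by
            rw [hd, hd']; exact braidEquiv_of_move hmv₁
          rcases ihv with ⟨g0, heqv⟩ | ⟨g0, u, h1u, h2u, h3u, h4u⟩
          · exact Or.inl ⟨e0.trans g0, braidEquiv_trans heqv hstep⟩
          · exact Or.inr ⟨e0.trans g0, u, h1u, h2u, h3u,
              braidEquiv_trans (braidEquiv_symm hstep) h4u⟩
  -- conclude
  intro β hβ β' hβ' he0
  rcases inv β hβ with ⟨g0, heq⟩ | ⟨g0, u, hru_a, hru_b, hae, hbe⟩ <;>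
    rcases inv β' hβ' with ⟨g0', heq'⟩ | ⟨g0', u', hru_a', hru_b', hae', hbe'⟩
  · exact braidEquiv_trans (braidEquiv_symm heq) heq'
  · rw [g0, g0'] at he0; injection he0 with f; exact absurd f hane
  · rw [g0, g0'] at he0; injection he0 with f; exact absurd f.symm hane
  · -- both on b-side
    have haa : BraidEquiv M (a :: u) (a :: u') :=
      braidEquiv_trans (braidEquiv_symm hae) hae'
    have hlen_u : (a :: u).length = n - 2 := by
      have := braidEquiv_length hae
      have h2 : (α.drop 2).length = n - 2 := by simp [hlen]
      omega
    have hbb : BraidEquiv M (b :: u) (b :: u') :=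
      hD' a b u u' hab hru_a hru_b hru_a' hru_b' hlen_u haa
    exact braidEquiv_trans hbe (braidEquiv_trans hbb (braidEquiv_symm hbe'))

end Main2
section Main3

variable {W : Type*} [Group W] {M : CoxeterMatrix B} (cs : CoxeterSystem M W)

theorem clauseD_step (n : ℕ)
    (ih : ∀ m, m < n → ClauseB cs m ∧ ClauseT cs m ∧ ClauseC cs m ∧ ClauseD cs m ∧ ClauseA cs m) :
    ClauseD cs n := by
  intro a b w w' hab hraw hrbw hraw' hrbw' hlen hequiv
  by_cases h0 : ClassHasShadowAt M (a :: w) 0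
  · have hn1 : ¬ ClassHasShadowAt M (a :: w) 1 :=
      fun h1 => clauseB_step cs n ih (a :: w) hraw hlen h0 h1
    have hT := clauseT_step cs n (a :: w) hraw hlen h0 hn1
    -- w is nonempty
    have hn3 : 3 ≤ n := by
      obtain ⟨β₀, hβ₀, hs⟩ := h0
      have := shadow_lt_length hs
      have := braidEquiv_length hβ₀
      omega
    have hwl : w.length + 1 = n := by simpa using hlen
    have hw0 : w[0]? = some (w.get ⟨0, by omega⟩) := by
      rw [List.getElem?_eq_getElem]; rfl
    set z := w.get ⟨0, by omega⟩ with hz_def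
    have haw1 : (a :: w)[1]? = some z := by simpa using hw0
    -- identify the second letter of a :: w'
    have hw'0 : w'[0]? = some z := by
      rcases hT (a :: w') hequiv with ⟨-, e1⟩ | ⟨e0, -⟩
      · rw [haw1] at e1; simpa using e1
      · exfalso
        rw [haw1] at e0
        have : a = z := by simpa using e0
        have hwform : w = z :: w.drop 1 := eq_cons_of_getElem0 hw0
        rw [this, hwform] at hraw
        exact (not_isReduced_cons_cons cs z _) hraw
    have hC := clauseC_step cs n ih (a :: w) hraw hlen h0 hn1 (a :: w)
      (mem_braidClass_self _) (a :: w') hequiv (by simp)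
    -- (a :: w).drop 2 = w.drop 1
    have hda : (a :: w).drop 2 = w.drop 1 := by simp
    have hda' : (a :: w').drop 2 = w'.drop 1 := by simp
    rw [hda, hda'] at hC
    have hwform : w = z :: w.drop 1 := eq_cons_of_getElem0 hw0
    have hw'form : w' = z :: w'.drop 1 := eq_cons_of_getElem0 hw'0
    rw [hwform, hw'form]
    exact braidEquiv_cons b (braidEquiv_cons z hC)
  · obtain ⟨u, hu, he⟩ := frozen_head h0 rfl (a :: w') hequiv
    have : w' = u := by injection hu
    rw [this]
    exact braidEquiv_cons b he

lemma braidClass_nil : BraidClass M ([] : List B) = {([] : List B)} := by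
  ext β
  constructor
  · intro h
    induction h with
    | refl => rfl
    | @tail β' β'' hb hm ihn =>
      exfalso
      rw [Set.mem_singleton_iff] at ihn
      rw [ihn] at hm
      obtain ⟨u, v, s, t, -, h1, -⟩ := hm
      simp at h1
  · intro h
    rw [Set.mem_singleton_iff] at h
    rw [h]
    exact mem_braidClass_self _

lemma classShadow_nil : {i | ClassHasShadowAt M ([] : List B) i} = ∅ := by
  ext i
  simp only [Set.mem_setOf_eq, Set.mem_empty_iff_false, iff_false]
  rintro ⟨β, hβ, hs⟩
  rw [braidClass_nil] at hβ
  rw [Set.mem_singleton_iff] at hβ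
  subst hβ
  obtain ⟨s, t, -, h1, -⟩ := hs
  simp at h1

end Main3
section Main4

variable {W : Type*} [Group W] {M : CoxeterMatrix B} (cs : CoxeterSystem M W)

theorem clauseA_step (n : ℕ)
    (ih : ∀ m, m < n → ClauseB cs m ∧ ClauseT cs m ∧ ClauseC cs m ∧ ClauseD cs m ∧ ClauseA cs m) :
    ClauseA cs n := by
  intro α hred hlen
  by_cases h0 : ClassHasShadowAt M α 0
  · -- main case: the class has a shadow at position 0
    have hn1 : ¬ ClassHasShadowAt M α 1 := fun h1 => clauseB_step cs n ih α hred hlen h0 h1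
    have hT := clauseT_step cs n α hred hlen h0 hn1
    have hC := clauseC_step cs n ih α hred hlen h0 hn1
    have hn3 : 3 ≤ n := by
      obtain ⟨β₀, hβ₀, hs⟩ := h0
      have := shadow_lt_length hs
      have := braidEquiv_length hβ₀
      omega
    have hα0 : α[0]? = some (α.get ⟨0, by omega⟩) := by
      rw [List.getElem?_eq_getElem (by omega)]; rfl
    have hα1 : α[1]? = some (α.get ⟨1, by omega⟩) := by
      rw [List.getElem?_eq_getElem (by omega)]; rfl
    set a := α.get ⟨0, by omega⟩ with ha_def
    set b := α.get ⟨1, by omega⟩ with hb_def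
    have hαform : α = a :: b :: α.drop 2 := eq_cons_cons_of_getElem01 hα0 hα1
    have hane : a ≠ b := by
      intro h'
      rw [h'] at hαform
      exact (not_isReduced_cons_cons cs b _) (hαform ▸ hred)
    set S := {i | ClassHasShadowAt M α i} with hS_def
    have hSfin : S.Finite := classShadow_finite (M := M) α
    have hS0 : 0 ∈ S := h0
    have hk1 : 0 < S.ncard := by
      rw [Set.ncard_pos hSfin]; exact ⟨0, hS0⟩
    -- per-side bound
    have side_bound : ∀ x y : B, ∀ β₁, β₁ ∈ BraidClass M α → β₁ = x :: y :: β₁.drop 2 →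
        (BraidClass M (β₁.drop 2)).Finite ∧
        (BraidClass M (β₁.drop 2)).ncard ≤ 2 ^ (S.ncard - 1) := by
      intro x y β₁ hmem hform
      have hred₁ : cs.IsReduced β₁ := braidEquiv_isReduced cs hmem hred
      have hlen₁ : β₁.length = n := (braidEquiv_length hmem).symm.trans hlen
      have hredd : cs.IsReduced (β₁.drop 2) := CoxeterSystem.IsReduced.drop hred₁ 2
      have hlend : (β₁.drop 2).length = n - 2 := by simp [hlen₁]
      obtain ⟨-, -, -, -, hA'⟩ := ih (n - 2) (by omega)
      obtain ⟨hfin, hcard⟩ := hA' (β₁.drop 2) hredd hlend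
      refine ⟨hfin, hcard.trans ?_⟩
      apply Nat.pow_le_pow_right (by norm_num)
      have hsub : (fun j => j + 2) '' {j | ClassHasShadowAt M (β₁.drop 2) j} ⊆ S \ {0} := by
        rintro i ⟨j, ⟨d, hd, hsd⟩, rfl⟩
        have hlift : BraidEquiv M (x :: y :: β₁.drop 2) (x :: y :: d) :=
          braidEquiv_cons x (braidEquiv_cons y hd)
        have hmem2 : (x :: y :: d) ∈ BraidClass M α :=
          braidEquiv_trans hmem (hform ▸ hlift)
        refine ⟨⟨x :: y :: d, hmem2, ?_⟩, by simp⟩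
        exact hasShadowAt_cons_succ.mpr (hasShadowAt_cons_succ.mpr hsd)
      have hle := Set.ncard_le_ncard hsub (hSfin.sdiff)
      rw [Set.ncard_image_of_injective _ (add_left_injective 2)] at hle
      rw [Set.ncard_sdiff_singleton_of_mem hS0] at hle
      exact hle
    obtain ⟨hfinA, hcardA⟩ := side_bound a b α (mem_braidClass_self α) hαform
    by_cases hbex : ∃ βb, βb ∈ BraidClass M α ∧ βb[0]? = some b
    · obtain ⟨βb, hβb, hβb0⟩ := hbex
      have hβb1 : βb[1]? = some a := by
        rcases hT βb hβb with ⟨e0, -⟩ | ⟨-, e1⟩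
        · exfalso
          rw [hβb0, hα0] at e0
          injection e0 with f
          exact hane f.symm
        · rw [e1, hα0]
      have hβbform : βb = b :: a :: βb.drop 2 := eq_cons_cons_of_getElem01 hβb0 hβb1
      obtain ⟨hfinB, hcardB⟩ := side_bound b a βb hβb hβbform
      have hcov : BraidClass M α ⊆ (fun d => a :: b :: d) '' BraidClass M (α.drop 2) ∪
          (fun d => b :: a :: d) '' BraidClass M (βb.drop 2) := by
        intro β hβ
        rcases hT β hβ with ⟨e0, e1⟩ | ⟨e0, e1⟩
        · left
          have hβ0 : β[0]? = some a := by rw [e0, hα0]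
          have hβ1 : β[1]? = some b := by rw [e1, hα1]
          have hβform := eq_cons_cons_of_getElem01 hβ0 hβ1
          exact ⟨β.drop 2, hC α (mem_braidClass_self α) β hβ (by rw [hα0, hβ0]), hβform.symm⟩
        · right
          have hβ0 : β[0]? = some b := by rw [e0, hα1]
          have hβ1 : β[1]? = some a := by rw [e1, hα0]
          have hβform := eq_cons_cons_of_getElem01 hβ0 hβ1
          exact ⟨β.drop 2, hC βb hβb β hβ (by rw [hβb0, hβ0]), hβform.symm⟩
      have hfinU : ((fun d => a :: b :: d) '' BraidClass M (α.drop 2) ∪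
          (fun d => b :: a :: d) '' BraidClass M (βb.drop 2)).Finite :=
        (hfinA.image _).union (hfinB.image _)
      refine ⟨Set.Finite.subset hfinU hcov, ?_⟩
      calc (BraidClass M α).ncard
          ≤ _ := Set.ncard_le_ncard hcov hfinU
        _ ≤ ((fun d => a :: b :: d) '' BraidClass M (α.drop 2)).ncard +
            ((fun d => b :: a :: d) '' BraidClass M (βb.drop 2)).ncard :=
            Set.ncard_union_le _ _
        _ ≤ (BraidClass M (α.drop 2)).ncard + (BraidClass M (βb.drop 2)).ncard :=
            add_le_add (Set.ncard_image_le hfinA) (Set.ncard_image_le hfinB)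
        _ ≤ 2 ^ (S.ncard - 1) + 2 ^ (S.ncard - 1) := add_le_add hcardA hcardB
        _ = 2 ^ S.ncard := by
            have h' : S.ncard - 1 + 1 = S.ncard := by omega
            calc 2 ^ (S.ncard - 1) + 2 ^ (S.ncard - 1) = 2 ^ (S.ncard - 1) * 2 := by ring
              _ = 2 ^ (S.ncard - 1 + 1) := (pow_succ 2 _).symm
              _ = 2 ^ S.ncard := by rw [h']
    · -- only the a-side occurs
      have hcov : BraidClass M α ⊆ (fun d => a :: b :: d) '' BraidClass M (α.drop 2) := by
        intro β hβ
        rcases hT β hβ with ⟨e0, e1⟩ | ⟨e0, -⟩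
        · have hβ0 : β[0]? = some a := by rw [e0, hα0]
          have hβ1 : β[1]? = some b := by rw [e1, hα1]
          have hβform := eq_cons_cons_of_getElem01 hβ0 hβ1
          exact ⟨β.drop 2, hC α (mem_braidClass_self α) β hβ (by rw [hα0, hβ0]), hβform.symm⟩
        · exfalso
          exact hbex ⟨β, hβ, by rw [e0, hα1]⟩
      refine ⟨Set.Finite.subset (hfinA.image _) hcov, ?_⟩
      calc (BraidClass M α).ncard
          ≤ _ := Set.ncard_le_ncard hcov (hfinA.image _)
        _ ≤ (BraidClass M (α.drop 2)).ncard := Set.ncard_image_le hfinA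
        _ ≤ 2 ^ (S.ncard - 1) := hcardA
        _ ≤ 2 ^ S.ncard := Nat.pow_le_pow_right (by norm_num) (by omega)
  · -- no class shadow at 0 : peel one letter
    cases α with
    | nil =>
      rw [braidClass_nil, classShadow_nil]
      simp
    | cons x τ =>
      have hτred : cs.IsReduced τ := by
        have := CoxeterSystem.IsReduced.drop hred 1
        simpa using this
      have hτlen : τ.length = n - 1 := by simp at hlen; omega
      have hn1' : 1 ≤ n := by simp at hlen; omega
      obtain ⟨-, -, -, -, hA'⟩ := ih (n - 1) (by omega)
      obtain ⟨hfin, hcard⟩ := hA' τ hτred hτlen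
      have hcls : BraidClass M (x :: τ) = (fun u => x :: u) '' BraidClass M τ := by
        ext β
        constructor
        · intro hβ
          obtain ⟨u, hu, he⟩ := frozen_head h0 rfl β hβ
          exact ⟨u, he, hu.symm⟩
        · rintro ⟨u, hu, rfl⟩
          exact braidEquiv_cons x hu
      have hshad : {i | ClassHasShadowAt M (x :: τ) i} =
          (fun j => j + 1) '' {j | ClassHasShadowAt M τ j} := by
        ext i
        simp only [Set.mem_setOf_eq, Set.mem_image]
        constructor
        · rintro ⟨β, hβ, hs⟩
          obtain ⟨u, hu, he⟩ := frozen_head h0 rfl β hβ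
          subst hu
          match i with
          | 0 => exact absurd ⟨x :: u, hβ, hs⟩ h0
          | (j+1) => exact ⟨j, ⟨u, he, hasShadowAt_cons_succ.mp hs⟩, rfl⟩
        · rintro ⟨j, ⟨u, hu, hs⟩, rfl⟩
          exact ⟨x :: u, braidEquiv_cons x hu, hasShadowAt_cons_succ.mpr hs⟩
      rw [hcls, hshad]
      refine ⟨hfin.image _, ?_⟩
      rw [Set.ncard_image_of_injective _ (fun u v h => by injection h),
        Set.ncard_image_of_injective _ (add_left_injective 1)]
      exact hcard

/-- The full induction package. -/
theorem pkg : ∀ n : ℕ, ClauseB cs n ∧ ClauseT cs n ∧ ClauseC cs n ∧ ClauseD cs n ∧ ClauseA cs n := by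
  intro n
  induction n using Nat.strong_induction_on with
  | _ n ih =>
    exact ⟨clauseB_step cs n ih, clauseT_step cs n, clauseC_step cs n ih,
      clauseD_step cs n ih, clauseA_step cs n ih⟩

end Main4
/-- the braid class of a reduced expression for a non-identity element
has at most `2 ^ rank α` elements. -/
theorem statement_13 {B W : Type*} [Group W] {M : CoxeterMatrix B}
    (cs : CoxeterSystem M W) (hsl : SimplyLaced M) (htf : TriangleFree M)
    (w : W) (α : List B) (hw : cs.wordProd α = w) (hred : cs.IsReduced α) (hw1 : w ≠ 1) :
    (BraidClass M α).Finite ∧ (BraidClass M α).ncard ≤ 2 ^ rank M α := by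
  have h := (pkg cs α.length).2.2.2.2 α hred rfl
  exact ⟨h.1, h.2⟩

end BraidFormal
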